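/- Let f : ℝ^d → ℝ be convex and differentiable, let x* be a global minimizer with f* = f(x*), and let H, L, D > 0. Let (x^k) be a sequence with ‖x^k − x*‖ ≤ D for all k, such that for every k at least one of the following holds: f(x^{k+1}) ≤ f(x^k) − (1/(3√H))·‖∇f(x^k)‖^{3/2}, or f(x^{k+1}) ≤ f(x^k) − (2/(9L))·‖∇f(x^k)‖². Fix K ≥ 1 and suppose (f(x^j) − f*)^{1/2} ≥ (3/2)·L·D²/√(H·D³) for all 0 ≤ j ≤ K. Then f(x^K) − f* ≤ (9·√(H·D³) + 3·√(f(x⁰) − f*))² / K². -/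

import Mathlib

open scoped RealInnerProductSpace

lemma grad_convex_ineq {d : ℕ} (f : EuclideanSpace ℝ (Fin d) → ℝ)
    (hf : Differentiable ℝ f) (hconv : ConvexOn ℝ Set.univ f)
    (p y : EuclideanSpace ℝ (Fin d)) :
    f p + ⟪gradient f p, y - p⟫ ≤ f y := by
  set v := y - p with hv
  have hgrad : HasGradientAt f (gradient f p) p := (hf p).hasGradientAt
  have hfd : HasFDerivAt f ((InnerProductSpace.toDual ℝ _) (gradient f p)) p :=
    (hasGradientAt_iff_hasFDerivAt).mp hgrad
  -- the curve t ↦ p + t • v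
  have hcurve : ∀ t : ℝ, HasDerivAt (fun t : ℝ => p + t • v) v t := by
    intro t
    have h1 : HasDerivAt (fun t : ℝ => t • v) ((1:ℝ) • v) t :=
      (hasDerivAt_id t).smul_const v
    simpa [one_smul] using h1.const_add p
  set g : ℝ → ℝ := fun t => f (p + t • v) with hg
  have hgderiv : HasDerivAt g (⟪gradient f p, v⟫) 0 := by
    have := hfd.comp_hasDerivAt_of_eq (f := fun t : ℝ => p + t • v)
      (x := (0:ℝ)) (hcurve 0) (by simp)
    simpa [InnerProductSpace.toDual_apply_apply, Function.comp_def] using this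
  have hgconv : ConvexOn ℝ Set.univ g := by
    have := hconv.comp_affineMap (AffineMap.lineMap p y)
    have hs : (AffineMap.lineMap p y : ℝ →ᵃ[ℝ] _) ⁻¹' Set.univ = Set.univ := by simp
    rw [hs] at this
    have heq : ∀ t : ℝ, p + t • v = AffineMap.lineMap p y t := by
      intro t
      simp only [AffineMap.lineMap_apply_module, hv]
      module
    have hfun : g = f ∘ AffineMap.lineMap p y := by
      funext t
      simp only [hg, Function.comp_apply, heq t]
    rw [hfun]; exact this
  have hslope := hgconv.le_slope_of_hasDerivAt (Set.mem_univ (0:ℝ))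
    (Set.mem_univ (1:ℝ)) one_pos hgderiv
  have hsl : slope g 0 1 = f y - f p := by
    simp [slope_def_field, hg, hv]
  rw [hsl] at hslope
  linarith [hslope]

set_option maxHeartbeats 2000000 in
theorem accelerated_regime_rate {d : ℕ}
    (f : EuclideanSpace ℝ (Fin d) → ℝ)
    (hf : Differentiable ℝ f) (hconv : ConvexOn ℝ Set.univ f)
    (xstar : EuclideanSpace ℝ (Fin d)) (hmin : ∀ y, f xstar ≤ f y)
    (H L D : ℝ) (hH : 0 < H) (hL : 0 < L) (hD : 0 < D)
    (x : ℕ → EuclideanSpace ℝ (Fin d))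
    (hdist : ∀ k, ‖x k - xstar‖ ≤ D)
    (hstep : ∀ k,
      f (x (k+1)) ≤ f (x k)
          - (1/(3*Real.sqrt H)) * ‖gradient f (x k)‖ ^ ((3:ℝ)/2) ∨
      f (x (k+1)) ≤ f (x k) - (2/(9*L)) * ‖gradient f (x k)‖^2)
    (K : ℕ) (hK : 1 ≤ K)
    (hreg : ∀ j : ℕ, j ≤ K →
      (f (x j) - f xstar) ^ ((1:ℝ)/2) ≥ (3/2) * L * D^2 / Real.sqrt (H * D^3)) :
    f (x K) - f xstar
      ≤ (9 * Real.sqrt (H * D^3) + 3 * Real.sqrt (f (x 0) - f xstar))^2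
          / (K:ℝ)^2 := by
  have hq : 0 < Real.sqrt (H * D^3) := Real.sqrt_pos.mpr (by positivity)
  set q := Real.sqrt (H * D^3) with hqdef
  have hq2 : q ^ 2 = H * D ^ 3 := Real.sq_sqrt (by positivity)
  have hδ0 : ∀ k : ℕ, 0 ≤ f (x k) - f xstar := fun k => sub_nonneg.mpr (hmin (x k))
  set s : ℕ → ℝ := fun k => Real.sqrt (f (x k) - f xstar) with hsdef
  have hs0 : ∀ k, 0 ≤ s k := fun k => Real.sqrt_nonneg _
  have hs2 : ∀ k : ℕ, s k ^ 2 = f (x k) - f xstar := fun k => Real.sq_sqrt (hδ0 k)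
  have hs00 : s 0 = Real.sqrt (f (x 0) - f xstar) := rfl
  clear_value s
  -- regime bound rephrased
  have hregs : ∀ j : ℕ, j ≤ K → (3/2) * L * D^2 ≤ q * s j := by
    intro j hj
    have h := hreg j hj
    rw [← Real.sqrt_eq_rpow] at h
    have h' : (3/2) * L * D^2 / q ≤ s j := by rw [hsdef]; exact h
    calc (3/2) * L * D^2 = ((3/2) * L * D^2 / q) * q := by field_simp
      _ ≤ s j * q := mul_le_mul_of_nonneg_right h' hq.le
      _ = q * s j := mul_comm _ _
  have hspos : ∀ j : ℕ, j ≤ K → 0 < s j := by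
    intro j hj
    have h := hregs j hj
    have hpos : (0:ℝ) < (3/2) * L * D^2 := by positivity
    nlinarith [hs0 j, hq]
  -- convexity: f(x k) - f* ≤ D * ‖∇f(x k)‖
  have hδD : ∀ k : ℕ, f (x k) - f xstar ≤ D * ‖gradient f (x k)‖ := by
    intro k
    have h := grad_convex_ineq f hf hconv (x k) xstar
    have hcs : |⟪gradient f (x k), xstar - x k⟫|
        ≤ ‖gradient f (x k)‖ * ‖xstar - x k‖ := abs_real_inner_le_norm _ _
    have hle : ‖xstar - x k‖ ≤ D := by rw [norm_sub_rev]; exact hdist k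
    have hneg := neg_abs_le (⟪gradient f (x k), xstar - x k⟫)
    have hDg : ‖gradient f (x k)‖ * ‖xstar - x k‖ ≤ ‖gradient f (x k)‖ * D :=
      mul_le_mul_of_nonneg_left hle (norm_nonneg _)
    rw [mul_comm]
    linarith
  -- per-step decrease in the regime
  have hkey : ∀ k, k < K → f (x (k+1)) - f xstar
      ≤ (f (x k) - f xstar) - s k ^ 3 / (3 * q) := by
    intro k hk
    have hg : f (x k) - f xstar ≤ D * ‖gradient f (x k)‖ := hδD k
    have hstepk := hstep k
    set G := ‖gradient f (x k)‖ with hGdef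
    have hG0' : 0 ≤ G := norm_nonneg _
    clear_value G
    clear hGdef
    have hG0 : 0 ≤ G := hG0'
    have hsG : s k ^ 2 ≤ D * G := by rw [hs2]; exact hg
    have hqfact : q = Real.sqrt H * Real.sqrt D ^ 3 := by
      rw [hqdef, Real.sqrt_mul hH.le]
      congr 1
      rw [show D^3 = D^2 * D by ring, Real.sqrt_mul (by positivity),
        Real.sqrt_sq hD.le]
      nlinarith [Real.sq_sqrt hD.le, Real.sqrt_nonneg D]
    have hsk := hspos k (le_of_lt hk)
    rcases hstepk with h | h
    · -- cubic case
      have hGr : G ^ ((3:ℝ)/2) = Real.sqrt G ^ 3 := by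
        rw [Real.sqrt_eq_rpow, ← Real.rpow_natCast (G ^ (1/(2:ℝ))) 3,
          ← Real.rpow_mul hG0]
        norm_num
      have hDs : (0:ℝ) < Real.sqrt D := Real.sqrt_pos.mpr hD
      have hGs : s k ≤ Real.sqrt D * Real.sqrt G := by
        rw [← Real.sqrt_mul hD.le]
        simp only [hsdef]
        exact Real.sqrt_le_sqrt hg
      have hGcube : s k ^ 3 ≤ (Real.sqrt D)^3 * (Real.sqrt G)^3 := by
        calc s k ^ 3 ≤ (Real.sqrt D * Real.sqrt G)^3 :=
              pow_le_pow_left₀ (hs0 k) hGs 3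
          _ = (Real.sqrt D)^3 * (Real.sqrt G)^3 := by ring
      have hHs : (0:ℝ) < Real.sqrt H := Real.sqrt_pos.mpr hH
      have hfinal : s k ^ 3 / (3 * q) ≤ (1/(3*Real.sqrt H)) * Real.sqrt G ^ 3 := by
        rw [hqfact, div_le_iff₀ (by positivity)]
        calc s k ^ 3 ≤ (Real.sqrt D)^3 * (Real.sqrt G)^3 := hGcube
          _ = 1 / (3 * Real.sqrt H) * Real.sqrt G ^ 3 *
              (3 * (Real.sqrt H * Real.sqrt D ^ 3)) := by field_simp
      rw [hGr] at h
      linarith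
    · -- quadratic case
      have hr := hregs k (le_of_lt hk)
      have hG2 : s k ^ 4 ≤ D^2 * G^2 := by nlinarith [hsG, hs0 k, hG0]
      have hfinal : s k ^ 3 / (3*q) ≤ (2/(9*L)) * G^2 := by
        rw [div_le_iff₀ (by positivity)]
        apply (mul_le_mul_iff_of_pos_right hsk).mp
        have hc : (2/(9*L)) * G^2 * (3*q) * s k * (9*L) = 6*(q * s k)*G^2 := by
          field_simp; ring
        have h1 : 9*L*(s k)^4 ≤ 9*L*(D^2*G^2) := by nlinarith [hG2, hL]
        have h2 : 9*L*(D^2*G^2) ≤ 6*(q * s k)*G^2 := by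
          nlinarith [hr, sq_nonneg G, hL]
        nlinarith [hc, h1, h2, hL]
      linarith
  -- induction: j * s j ≤ 6 q for j ≤ K
  have hind : ∀ j : ℕ, j ≤ K → (j:ℝ) * s j ≤ 6 * q := by
    intro j
    induction j with
    | zero => intro _; simp; positivity
    | succ n ih =>
      intro hn
      have hn' : n ≤ K := Nat.le_of_succ_le hn
      have ihn := ih hn'
      have hbpos : 0 < s n := hspos n hn'
      have hapos : 0 < s (n+1) := hspos (n+1) hn
      have hab2 : s (n+1) ^ 2 ≤ s n ^ 2 - s n ^ 3 / (3*q) := by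
        rw [hs2, hs2]; exact hkey n hn
      set a := s (n+1) with ha
      set b := s n with hb
      have hab2' : b^3 ≤ (b^2 - a^2) * (3*q) := by
        have hdiv : b^3/(3*q) ≤ b^2 - a^2 := by linarith
        exact (div_le_iff₀ (by positivity)).mp hdiv
      have haleb : a ≤ b := by
        have hd : (0:ℝ) ≤ b^3/(3*q) := by positivity
        nlinarith [hab2, hapos, hbpos, hd]
      have h6q : b * b ≤ 6*q*(b - a) := by
        nlinarith [hab2', hapos, hbpos, hq, mul_pos hbpos hbpos,
          mul_nonneg (sub_nonneg.mpr haleb) hq.le]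
      have hfin : ((n:ℝ)+1) * a * b ≤ 6*q*b := by
        nlinarith [mul_le_mul_of_nonneg_right ihn hapos.le, h6q,
          mul_le_mul_of_nonneg_right haleb hbpos.le, (Nat.cast_nonneg n : (0:ℝ) ≤ n),
          mul_pos hapos hbpos]
      have := (mul_le_mul_iff_of_pos_right hbpos).mp hfin
      push_cast
      linarith
  -- conclude
  have hKs := hind K le_rfl
  have hKpos : (0:ℝ) < (K:ℝ) := by exact_mod_cast hK
  have hδK : (f (x K) - f xstar) * (K:ℝ)^2 ≤ 36 * q^2 := by
    have h1 : ((K:ℝ) * s K)^2 ≤ (6*q)^2 := by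
      apply sq_le_sq' _ hKs
      nlinarith [mul_nonneg hKpos.le (hs0 K), hq]
    calc (f (x K) - f xstar) * (K:ℝ)^2 = ((K:ℝ) * s K)^2 := by
          rw [← hs2 K]; ring
      _ ≤ (6*q)^2 := h1
      _ = 36 * q^2 := by ring
  have hRHS : 36 * q^2 ≤ (9 * q + 3 * s 0)^2 := by
    nlinarith [hs0 0, hq]
  rw [le_div_iff₀ (by positivity : (0:ℝ) < (K:ℝ)^2), ← hs00]
  calc (f (x K) - f xstar) * (K:ℝ)^2 ≤ 36 * q^2 := hδK
    _ ≤ (9 * q + 3 * s 0)^2 := hRHS
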